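/- For every 2 ≤ k ≤ n, F(n,k,1) = 2(n−1), and the minimally strong subgraph (k,1)-connected digraphs attaining this maximum are exactly the symmetric digraphs whose underlying undirected graphs are trees. -/

import Mathlib

/-- A digraph on vertex type `V`: a loopless binary arc relation. -/
structure Dgraph (V : Type) where
  Arc : V → V → Prop
  loopless : ∀ v, ¬ Arc v v

namespace Dgraph

variable {V : Type}

/-- A digraph is strong (strongly connected) if every vertex reaches every vertex. -/
def IsStrong (D : Dgraph V) : Prop := ∀ u v : V, Relation.ReflTransGen D.Arc u v

/-- A strong subgraph of `D`: a vertex set together with an arc relation contained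
in `D`'s arcs, whose arcs stay inside the vertex set, and which is strongly
connected on its vertex set. -/
structure StrongSub (D : Dgraph V) where
  verts : Set V
  Arc : V → V → Prop
  arc_sub : ∀ u v, Arc u v → D.Arc u v
  arc_mem : ∀ u v, Arc u v → u ∈ verts ∧ v ∈ verts
  strong : ∀ u ∈ verts, ∀ v ∈ verts, Relation.ReflTransGen Arc u v

/-- `κ_S(D)`: the maximum number of pairwise internally disjoint strong subgraphs
of `D` containing `S` (they share exactly the vertices of `S` and no arcs). -/
noncomputable def kappaS (D : Dgraph V) (S : Set V) : ℕ :=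
  sSup {p : ℕ | ∃ f : Fin p → StrongSub D,
    (∀ i, S ⊆ (f i).verts) ∧
    (∀ i j, i ≠ j → (f i).verts ∩ (f j).verts = S) ∧
    (∀ i j, i ≠ j → ∀ u v, ¬ ((f i).Arc u v ∧ (f j).Arc u v))}

/-- The strong subgraph `k`-connectivity `κ_k(D)`. -/
noncomputable def kappa [Fintype V] (D : Dgraph V) (k : ℕ) : ℕ :=
  sInf {m : ℕ | ∃ S : Finset V, S.card = k ∧ kappaS D ↑S = m}

/-- The number of arcs of a digraph. -/
noncomputable def arcCount (D : Dgraph V) : ℕ :=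
  Nat.card {p : V × V // D.Arc p.1 p.2}

/-- Delete the arc `e` from `D`. -/
def deleteArc (D : Dgraph V) (e : V × V) : Dgraph V where
  Arc u v := D.Arc u v ∧ (u, v) ≠ e
  loopless v h := D.loopless v h.1

/-- `D` is minimally strong subgraph `(k,ℓ)`-connected. -/
noncomputable def MinSSC [Fintype V] (D : Dgraph V) (k ℓ : ℕ) : Prop :=
  ℓ ≤ kappa D k ∧ ∀ e : V × V, D.Arc e.1 e.2 → kappa (deleteArc D e) k ≤ ℓ - 1

/-- Minimum out-degree `δ⁺(D)`. -/
noncomputable def minOutDeg [Fintype V] (D : Dgraph V) : ℕ :=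
  sInf (Set.range fun v => Nat.card {w : V // D.Arc v w})

/-- Minimum in-degree `δ⁻(D)`. -/
noncomputable def minInDeg [Fintype V] (D : Dgraph V) : ℕ :=
  sInf (Set.range fun v => Nat.card {w : V // D.Arc w v})

/-- The subdigraph of `D` induced on a vertex set `W`. -/
def induce (D : Dgraph V) (W : Set V) : Dgraph W where
  Arc u v := D.Arc u v
  loopless v h := D.loopless v h

/-- The strong vertex-connectivity `κ(D)`: the minimum number of vertices whose
removal leaves a non-strong digraph, or `n - 1` if there is no such set. -/
noncomputable def vertConn [Fintype V] (D : Dgraph V) : ℕ :=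
  sInf ({Fintype.card V - 1} ∪
    {m : ℕ | ∃ Q : Finset V, Q.card = m ∧ ¬ IsStrong (D.induce (↑Q : Set V)ᶜ)})

/-- `D` is symmetric if the reverse of every arc is an arc. -/
def IsSymmetric (D : Dgraph V) : Prop := ∀ u v, D.Arc u v → D.Arc v u

/-- The underlying undirected (simple) graph of a digraph. -/
def underlying (D : Dgraph V) : SimpleGraph V where
  Adj u v := D.Arc u v ∨ D.Arc v u
  symm := ⟨by intro u v h; tauto⟩
  loopless := ⟨by intro v h; rcases h with h | h <;> exact D.loopless v h⟩

/-- The minimum number of arcs of a minimally strong subgraph `(k,ℓ)`-connected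
digraph on `n` vertices. -/
noncomputable def fMin (n k ℓ : ℕ) : ℕ :=
  sInf {m : ℕ | ∃ D : Dgraph (Fin n), MinSSC D k ℓ ∧ arcCount D = m}

/-- The maximum number of arcs of a minimally strong subgraph `(k,ℓ)`-connected
digraph on `n` vertices. -/
noncomputable def FMax (n k ℓ : ℕ) : ℕ :=
  sSup {m : ℕ | ∃ D : Dgraph (Fin n), MinSSC D k ℓ ∧ arcCount D = m}

private def reachN (A : V → V → Prop) (X : V → Prop) : ℕ → V → Prop
  | 0, v => X v
  | (m+1), v => ∃ u, reachN A X m u ∧ A u v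

private lemma reachN_of_rtg {A : V → V → Prop} {X : V → Prop} {x v : V} (hx : X x)
    (h : Relation.ReflTransGen A x v) : ∃ m, reachN A X m v := by
  induction h with
  | refl => exact ⟨0, hx⟩
  | tail _ h2 ih => obtain ⟨m, hm⟩ := ih; exact ⟨m + 1, _, hm, h2⟩

private lemma exists_branching {A : V → V → Prop} {X : V → Prop}
    (hreach : ∀ v, ∃ m, reachN A X m v) :
    ∃ p : V → V, (∀ v, ¬ X v → A (p v) v) ∧
      (∀ v, ∃ x, X x ∧ Relation.ReflTransGen (fun a b => ¬ X b ∧ a = p b) x v) := by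
  classical
  have key : ∀ v, ∃ u, ¬ X v → (reachN A X (Nat.find (hreach v) - 1) u ∧ A u v) := by
    intro v
    by_cases hv : X v
    · exact ⟨v, fun h => absurd hv h⟩
    · have h0 : Nat.find (hreach v) ≠ 0 := by
        intro h
        have hs := Nat.find_spec (hreach v)
        rw [h] at hs
        exact hv hs
      obtain ⟨m, hm⟩ : ∃ m, Nat.find (hreach v) = m + 1 :=
        ⟨Nat.find (hreach v) - 1, by omega⟩
      have hs := Nat.find_spec (hreach v)
      rw [hm] at hs
      obtain ⟨u, hu, hA⟩ := hs
      exact ⟨u, fun _ => ⟨by rw [hm]; simpa using hu, hA⟩⟩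
  choose p hp using key
  have harc : ∀ v, ¬ X v → A (p v) v := fun v hv => (hp v hv).2
  refine ⟨p, harc, ?_⟩
  have main : ∀ N v, Nat.find (hreach v) ≤ N →
      ∃ x, X x ∧ Relation.ReflTransGen (fun a b => ¬ X b ∧ a = p b) x v := by
    intro N
    induction N with
    | zero =>
      intro v hv
      have hs := Nat.find_spec (hreach v)
      have : Nat.find (hreach v) = 0 := by omega
      rw [this] at hs
      exact ⟨v, hs, .refl⟩
    | succ N ih =>
      intro v hv
      by_cases hXv : X v
      · exact ⟨v, hXv, .refl⟩
      · have hplt : Nat.find (hreach (p v)) ≤ N := by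
          have h1 : Nat.find (hreach (p v)) ≤ Nat.find (hreach v) - 1 :=
            Nat.find_le (hp v hXv).1
          have h0 : Nat.find (hreach v) ≠ 0 := by
            intro h
            have hs := Nat.find_spec (hreach v)
            rw [h] at hs
            exact hXv hs
          omega
        obtain ⟨x, hx, hr⟩ := ih (p v) hplt
        exact ⟨x, hx, hr.tail ⟨hXv, rfl⟩⟩
  intro v
  exact main (Nat.find (hreach v)) v le_rfl

private lemma reachN_chain {A : V → V → Prop} {X : V → Prop} :
    ∀ {m : ℕ} {u : V}, reachN A X m u → ∃ c : ℕ → V, c m = u ∧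
      (∀ i, i < m → A (c i) (c (i + 1))) ∧ (∀ i, i ≤ m → reachN A X i (c i)) := by
  intro m
  induction m with
  | zero =>
    intro u hu
    exact ⟨fun _ => u, rfl, fun i hi => absurd hi (by omega), fun i hi => by
      have : i = 0 := by omega
      subst this; exact hu⟩
  | succ m ih =>
    rintro u ⟨y, hy, hA⟩
    obtain ⟨c, hcm, harc, hre⟩ := ih hy
    refine ⟨fun i => if i ≤ m then c i else u, by simp, ?_, ?_⟩
    · intro i hi
      rcases Nat.lt_or_ge i m with h | h
      · simpa [Nat.le_of_lt h, Nat.succ_le_of_lt h] using harc i h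
      · have : i = m := by omega
        subst this
        simpa [hcm] using hA
    · intro i hi
      rcases le_or_gt i m with h | h
      · simpa [h] using hre i h
      · have : i = m + 1 := by omega
        subst this
        have hval : (fun i => if i ≤ m then c i else u) (m + 1) = u := by
          simp [show ¬ (m + 1 ≤ m) by omega]
        rw [hval]
        exact ⟨y, by simpa [hcm] using hre m le_rfl, hA⟩

private lemma reachN_extend {A : V → V → Prop} {X : V → Prop} {c : ℕ → V} {j k : ℕ}
    (h : reachN A X k (c j)) {m : ℕ} (harc : ∀ i, i < m → A (c i) (c (i + 1))) :
    ∀ t, j + t ≤ m → reachN A X (k + t) (c (j + t)) := by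
  intro t
  induction t with
  | zero => intro _; simpa using h
  | succ t ih =>
    intro hle
    have h1 := ih (by omega)
    have h2 := harc (j + t) (by omega)
    exact ⟨c (j + t), h1, h2⟩

private lemma exists_path {A : V → V → Prop} {v u : V}
    (h : Relation.ReflTransGen A v u) :
    ∃ (m : ℕ) (c : ℕ → V), c 0 = v ∧ c m = u ∧ (∀ i, i < m → A (c i) (c (i + 1))) ∧
      (∀ i j, i ≤ m → j ≤ m → c i = c j → i = j) := by
  classical
  have hex : ∃ m, reachN A (· = v) m u := reachN_of_rtg rfl h
  obtain ⟨c, hcm, harc, hre⟩ := reachN_chain (Nat.find_spec hex)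
  have haux : ∀ i j, i < j → j ≤ Nat.find hex → c i = c j → False := by
    intro i j hij hjm hceq
    have h1 : reachN A (· = v) i (c j) := hceq ▸ hre i (by omega)
    have h2 := reachN_extend h1 harc (Nat.find hex - j) (by omega)
    rw [show j + (Nat.find hex - j) = Nat.find hex by omega, hcm] at h2
    exact absurd (Nat.find_le (h := hex) h2) (by omega)
  refine ⟨Nat.find hex, c, hre 0 (Nat.zero_le _), hcm, harc, ?_⟩
  intro i j hi hj hceq
  rcases Nat.lt_trichotomy i j with h' | h' | h'
  · exact absurd (haux i j h' hj hceq) (fun x => x)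
  · exact h'
  · exact absurd (haux j i h' hi hceq.symm) (fun x => x)

open Classical in
private noncomputable def relFinset [Fintype V] (A : V → V → Prop) : Finset (V × V) :=
  Finset.univ.filter fun p => A p.1 p.2

private lemma mem_relFinset [Fintype V] {A : V → V → Prop} {e : V × V} :
    e ∈ relFinset A ↔ A e.1 e.2 := by
  classical
  simp [relFinset]

private lemma card_rel [Fintype V] (A : V → V → Prop) :
    Nat.card {p : V × V // A p.1 p.2} = (relFinset A).card := by
  classical
  rw [Nat.card_eq_fintype_card, relFinset]
  convert Fintype.card_subtype (p := fun p : V × V => A p.1 p.2) using 2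

private lemma key_bound [Fintype V] {D : Dgraph V}
    (hstrong : D.IsStrong)
    (hmin : ∀ e : V × V, D.Arc e.1 e.2 → ¬ IsStrong (D.deleteArc e))
    (X : Finset V) (hX : X.Nonempty) (R : V → V → Prop)
    (hRD : ∀ u v, R u v → D.Arc u v)
    (hRX : ∀ u v, R u v → u ∈ X ∧ v ∈ X)
    (hRs : ∀ u ∈ X, ∀ v ∈ X, Relation.ReflTransGen R u v) :
    D.arcCount ≤ (relFinset R).card + 2 * (Fintype.card V - X.card) := by
  classical
  obtain ⟨r, hr⟩ := hX
  have hreachOut : ∀ v, ∃ m, reachN D.Arc (· ∈ X) m v :=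
    fun v => reachN_of_rtg hr (hstrong r v)
  have hreachIn : ∀ v, ∃ m, reachN (Function.swap D.Arc) (· ∈ X) m v :=
    fun v => reachN_of_rtg hr (hstrong v r).swap
  obtain ⟨p, hpA, hpR⟩ := exists_branching hreachOut
  obtain ⟨q, hqA, hqR⟩ := exists_branching hreachIn
  set F : Finset (V × V) := relFinset R ∪ (Finset.univ \ X).image (fun v => (p v, v)) ∪
    (Finset.univ \ X).image (fun v => (v, q v)) with hF
  set T : V → V → Prop := fun a b => R a b ∨ (b ∉ X ∧ a = p b) ∨ (a ∉ X ∧ b = q a) with hT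
  have hTD : ∀ a b, T a b → D.Arc a b := by
    rintro a b (h | ⟨hb, rfl⟩ | ⟨ha, rfl⟩)
    · exact hRD _ _ h
    · exact hpA b hb
    · exact hqA a ha
  have hTF : ∀ a b, T a b → (a, b) ∈ F := by
    rintro a b (h | ⟨hb, rfl⟩ | ⟨ha, rfl⟩)
    · exact Finset.mem_union_left _ (Finset.mem_union_left _ (mem_relFinset.2 h))
    · exact Finset.mem_union_left _ (Finset.mem_union_right _
        (Finset.mem_image.2 ⟨b, by simpa using hb, rfl⟩))
    · exact Finset.mem_union_right _ (Finset.mem_image.2 ⟨a, by simpa using ha, rfl⟩)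
  have hTstrong : ∀ a b, Relation.ReflTransGen T a b := by
    intro a b
    obtain ⟨x, hx, hxa⟩ := hqR a
    obtain ⟨y, hy, hyb⟩ := hpR b
    have h1 : Relation.ReflTransGen T a x :=
      Relation.ReflTransGen.mono (fun s t h => Or.inr (Or.inr h)) _ _ hxa.swap
    have h2 : Relation.ReflTransGen T x y := Relation.ReflTransGen.mono (fun s t h => Or.inl h) _ _ (hRs x hx y hy)
    have h3 : Relation.ReflTransGen T y b :=
      Relation.ReflTransGen.mono (fun s t h => Or.inr (Or.inl h)) _ _ hyb
    exact (h1.trans h2).trans h3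
  have hsub : relFinset D.Arc ⊆ F := by
    intro e he
    by_contra heF
    refine hmin e (mem_relFinset.1 he) ?_
    intro a b
    refine Relation.ReflTransGen.mono ?_ _ _ (hTstrong a b)
    intro s t hst
    refine ⟨hTD s t hst, fun heq => heF ?_⟩
    rw [← heq]
    exact hTF s t hst
  have hcardsdiff : (Finset.univ \ X).card = Fintype.card V - X.card := by
    rw [Finset.card_sdiff_of_subset (Finset.subset_univ _), Finset.card_univ]
  calc D.arcCount = (relFinset D.Arc).card := card_rel _
    _ ≤ F.card := Finset.card_le_card hsub
    _ ≤ (relFinset R ∪ (Finset.univ \ X).image (fun v => (p v, v))).card +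
        ((Finset.univ \ X).image (fun v => (v, q v))).card := Finset.card_union_le _ _
    _ ≤ (relFinset R).card + ((Finset.univ \ X).image (fun v => (p v, v))).card +
        ((Finset.univ \ X).image (fun v => (v, q v))).card := by
        have := Finset.card_union_le (relFinset R) ((Finset.univ \ X).image (fun v => (p v, v)))
        omega
    _ ≤ (relFinset R).card + (Finset.univ \ X).card + (Finset.univ \ X).card := by
        have h1 := Finset.card_image_le (s := Finset.univ \ X) (f := fun v => (p v, v))
        have h2 := Finset.card_image_le (s := Finset.univ \ X) (f := fun v => (v, q v))
        omega
    _ = (relFinset R).card + 2 * (Fintype.card V - X.card) := by rw [hcardsdiff]; ring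

private lemma msd_card_le [Fintype V] [Nonempty V] {D : Dgraph V}
    (hstrong : D.IsStrong)
    (hmin : ∀ e : V × V, D.Arc e.1 e.2 → ¬ IsStrong (D.deleteArc e)) :
    D.arcCount ≤ 2 * (Fintype.card V - 1) := by
  classical
  obtain ⟨r⟩ := ‹Nonempty V›
  have hempty : relFinset (fun _ _ : V => False) = ∅ := by
    ext e; simp [mem_relFinset]
  have h := key_bound hstrong hmin {r} ⟨r, Finset.mem_singleton_self r⟩
    (fun _ _ => False) (fun _ _ h => h.elim) (fun _ _ h => h.elim)
    (by
      intro a ha b hb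
      rw [Finset.mem_singleton] at ha hb
      subst ha; subst hb
      exact .refl)
  rw [hempty] at h
  simpa using h

private lemma symm_conn_strong {D : Dgraph V} (hsym : D.IsSymmetric)
    (hconn : D.underlying.Preconnected) : D.IsStrong := by
  intro u v
  obtain ⟨w⟩ := hconn u v
  induction w with
  | nil => exact .refl
  | cons h _ ih =>
    refine Relation.ReflTransGen.head ?_ ih
    rcases h with h | h
    · exact h
    · exact hsym _ _ h

private lemma walk_to_rtg {D : Dgraph V} (hsym : D.IsSymmetric) (e : V × V) :
    ∀ {x y : V} (w : D.underlying.Walk x y), s(e.1, e.2) ∉ w.edges →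
      Relation.ReflTransGen (D.deleteArc e).Arc x y := by
  intro x y w
  induction w with
  | nil => intro _; exact .refl
  | @cons a b c h w ih =>
    intro hmem
    rw [SimpleGraph.Walk.edges_cons, List.mem_cons] at hmem
    push_neg at hmem
    refine Relation.ReflTransGen.head ⟨?_, ?_⟩ (ih hmem.2)
    · rcases h with h | h
      · exact h
      · exact hsym _ _ h
    · intro hab
      exact hmem.1 (by subst hab; rfl)

private lemma symm_tree_min {D : Dgraph V} (hsym : D.IsSymmetric)
    (ht : D.underlying.IsTree) :
    ∀ e : V × V, D.Arc e.1 e.2 → ¬ IsStrong (D.deleteArc e) := by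
  rintro ⟨u, v⟩ harc hstrong'
  have hadj : D.underlying.Adj u v := Or.inl harc
  have hbridge := SimpleGraph.isAcyclic_iff_forall_adj_isBridge.1 ht.IsAcyclic hadj
  rw [SimpleGraph.isBridge_iff] at hbridge
  have hnr := hbridge
  have main : ∀ y, Relation.ReflTransGen (D.deleteArc (u, v)).Arc u y →
      (D.underlying \ SimpleGraph.fromEdgeSet {s(u, v)}).Reachable u y := by
    intro y hy
    induction hy with
    | refl => exact SimpleGraph.Reachable.refl _
    | @tail b c hub hbc ih =>
      obtain ⟨hD, hne⟩ := hbc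
      have hadjbc : D.underlying.Adj b c := Or.inl hD
      by_cases hsame : s(b, c) = s(u, v)
      · rw [Sym2.eq_iff] at hsame
        rcases hsame with ⟨rfl, rfl⟩ | ⟨rfl, rfl⟩
        · exact absurd rfl hne
        · exact absurd ih hnr
      · refine ih.trans (SimpleGraph.Adj.reachable ?_)
        rw [SimpleGraph.sdiff_adj]
        refine ⟨hadjbc, ?_⟩
        rw [SimpleGraph.fromEdgeSet_adj]
        rintro ⟨hmem, -⟩
        exact hsame (by simpa using hmem)
  exact hnr (main v (hstrong' u v))

private lemma msd_symm_tree [Nonempty V] {D : Dgraph V}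
    (hstrong : D.IsStrong)
    (hmin : ∀ e : V × V, D.Arc e.1 e.2 → ¬ IsStrong (D.deleteArc e))
    (hsym : D.IsSymmetric) : D.underlying.IsTree := by
  classical
  have hpre : D.underlying.Preconnected := by
    intro u v
    have h := hstrong u v
    induction h with
    | refl => exact SimpleGraph.Reachable.refl _
    | tail _ harc ih => exact ih.trans (SimpleGraph.Adj.reachable (Or.inl harc))
  constructor
  · exact ⟨hpre⟩
  · rw [SimpleGraph.isAcyclic_iff_forall_adj_isBridge]
    intro a b hadj
    rw [SimpleGraph.isBridge_iff]
    intro hreach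
    rw [SimpleGraph.reachable_delete_edges_iff_exists_walk] at hreach
    obtain ⟨w, hw⟩ := hreach
    have harc : D.Arc a b := by
      rcases hadj with h | h
      · exact h
      · exact hsym _ _ h
    refine hmin (a, b) harc ?_
    have hdet : Relation.ReflTransGen (D.deleteArc (a, b)).Arc a b :=
      walk_to_rtg hsym (a, b) w (by simpa using hw)
    intro x y
    have h := hstrong x y
    induction h with
    | refl => exact .refl
    | @tail s t _ harc2 ih =>
      by_cases he : (s, t) = (a, b)
      · rw [Prod.ext_iff] at he
        obtain ⟨h1, h2⟩ := he
        simp only at h1 h2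
        subst h1; subst h2
        exact ih.trans hdet
      · exact ih.tail ⟨harc2, he⟩

private lemma symm_tree_card [Fintype V] {D : Dgraph V} (hsym : D.IsSymmetric)
    (ht : D.underlying.IsTree) : D.arcCount = 2 * (Fintype.card V - 1) := by
  classical
  have hequiv : {p : V × V // D.Arc p.1 p.2} ≃ D.underlying.Dart :=
    { toFun := fun p => ⟨p.1, Or.inl p.2⟩
      invFun := fun d => ⟨d.toProd, by
        rcases d.adj with h | h
        · exact h
        · exact hsym _ _ h⟩
      left_inv := fun p => rfl
      right_inv := fun d => rfl }
  have h1 : D.arcCount = Fintype.card D.underlying.Dart := by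
    rw [arcCount, Nat.card_congr hequiv, Nat.card_eq_fintype_card]
  have h2 := SimpleGraph.dart_card_eq_twice_card_edges (G := D.underlying)
  have h3 := ht.card_edgeFinset
  omega

private lemma msd_symm [Fintype V] {D : Dgraph V}
    (hstrong : D.IsStrong)
    (hmin : ∀ e : V × V, D.Arc e.1 e.2 → ¬ IsStrong (D.deleteArc e))
    (hn : 2 ≤ Fintype.card V)
    (hcard : D.arcCount = 2 * (Fintype.card V - 1)) : D.IsSymmetric := by
  classical
  intro a b hab
  by_contra hba
  have hne : a ≠ b := fun h => D.loopless a (h ▸ hab)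
  obtain ⟨m, c, hc0, hcm, harc, hinj⟩ := exists_path (hstrong b a)
  have hm2 : 2 ≤ m := by
    rcases m with _ | _ | m
    · exact absurd (by rw [← hcm, hc0]) hne
    · refine absurd ?_ hba
      have := harc 0 (by omega)
      rwa [hc0, show (0 : ℕ) + 1 = 1 from rfl, hcm] at this
    · omega
  set X : Finset V := (Finset.range (m + 1)).image c with hX
  have hmem : ∀ i, i ≤ m → c i ∈ X := fun i hi =>
    Finset.mem_image.2 ⟨i, Finset.mem_range.2 (by omega), rfl⟩
  have hcardX : X.card = m + 1 := by
    rw [hX, Finset.card_image_of_injOn, Finset.card_range]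
    intro i hi j hj hij
    have hi' : i < m + 1 := by simpa using hi
    have hj' : j < m + 1 := by simpa using hj
    exact hinj i j (by omega) (by omega) hij
  set R : V → V → Prop :=
    fun x y => (∃ i, i < m ∧ x = c i ∧ y = c (i + 1)) ∨ (x = a ∧ y = b) with hR
  have hRD : ∀ u v, R u v → D.Arc u v := by
    rintro u v (⟨i, hi, rfl, rfl⟩ | ⟨rfl, rfl⟩)
    · exact harc i hi
    · exact hab
  have hRX : ∀ u v, R u v → u ∈ X ∧ v ∈ X := by
    rintro u v (⟨i, hi, rfl, rfl⟩ | ⟨rfl, rfl⟩)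
    · exact ⟨hmem i (by omega), hmem (i + 1) (by omega)⟩
    · exact ⟨hcm ▸ hmem m le_rfl, hc0 ▸ hmem 0 (by omega)⟩
  have hstep : ∀ j, j ≤ m → ∀ i, i ≤ j → Relation.ReflTransGen R (c i) (c j) := by
    intro j
    induction j with
    | zero =>
      intro _ i hi
      have : i = 0 := by omega
      subst this
      exact .refl
    | succ j ih =>
      intro hj i hi
      rcases Nat.eq_or_lt_of_le hi with h | h
      · subst h
        exact .refl
      · exact (ih (by omega) i (by omega)).tail (Or.inl ⟨j, by omega, rfl, rfl⟩)
  have hRs : ∀ u ∈ X, ∀ v ∈ X, Relation.ReflTransGen R u v := by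
    intro u hu v hv
    obtain ⟨i, hi, rfl⟩ := Finset.mem_image.1 hu
    obtain ⟨j, hj, rfl⟩ := Finset.mem_image.1 hv
    rw [Finset.mem_range] at hi hj
    rcases le_total i j with h | h
    · exact hstep j (by omega) i h
    · have h1 : Relation.ReflTransGen R (c i) (c m) := hstep m le_rfl i (by omega)
      have h2 : R (c m) (c 0) := Or.inr ⟨hcm, hc0⟩
      have h3 := hstep j (by omega) 0 (by omega)
      exact (h1.tail h2).trans h3
  have hcR : (relFinset R).card ≤ m + 1 := by
    have hsub : relFinset R ⊆
        insert (a, b) ((Finset.range m).image fun i => (c i, c (i + 1))) := by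
      intro e he
      rw [mem_relFinset] at he
      rcases he with ⟨i, hi, h1, h2⟩ | ⟨h1, h2⟩
      · refine Finset.mem_insert_of_mem (Finset.mem_image.2 ⟨i, Finset.mem_range.2 hi, ?_⟩)
        rw [Prod.ext_iff]
        exact ⟨h1.symm, h2.symm⟩
      · have : e = (a, b) := Prod.ext h1 h2
        rw [this]
        exact Finset.mem_insert_self _ _
    calc (relFinset R).card ≤ _ := Finset.card_le_card hsub
      _ ≤ ((Finset.range m).image fun i => (c i, c (i + 1))).card + 1 :=
        Finset.card_insert_le _ _
      _ ≤ m + 1 := by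
        have := Finset.card_image_le (s := Finset.range m) (f := fun i => (c i, c (i + 1)))
        rw [Finset.card_range] at this
        omega
  have hXle : X.card ≤ Fintype.card V := by
    rw [← Finset.card_univ]
    exact Finset.card_le_card (Finset.subset_univ _)
  have hkey := key_bound hstrong hmin X ⟨c 0, hmem 0 (by omega)⟩ R hRD hRX hRs
  rw [hcard] at hkey
  omega

private lemma kappaS_bddAbove [Fintype V] (D : Dgraph V) (S : Set V) {a b : V}
    (ha : a ∈ S) (hb : b ∈ S) (hab : a ≠ b) :
    BddAbove {p : ℕ | ∃ f : Fin p → StrongSub D,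
      (∀ i, S ⊆ (f i).verts) ∧
      (∀ i j, i ≠ j → (f i).verts ∩ (f j).verts = S) ∧
      (∀ i j, i ≠ j → ∀ u v, ¬ ((f i).Arc u v ∧ (f j).Arc u v))} := by
  classical
  refine ⟨Fintype.card (V × V), ?_⟩
  rintro p ⟨f, hv, -, hd⟩
  have hg : ∀ i : Fin p, ∃ e : V × V, (f i).Arc e.1 e.2 := by
    intro i
    have hs := (f i).strong a (hv i ha) b (hv i hb)
    rcases hs.cases_head with h | ⟨c, hc, -⟩
    · exact absurd h hab
    · exact ⟨(a, c), hc⟩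
  choose g hgspec using hg
  have hginj : Function.Injective g := by
    intro i j hij
    by_contra hne
    exact hd i j hne (g i).1 (g i).2 ⟨hgspec i, by rw [hij]; exact hgspec j⟩
  simpa using Fintype.card_le_of_injective g hginj

private def fullSub (D : Dgraph V) (h : D.IsStrong) : StrongSub D :=
  ⟨Set.univ, D.Arc, fun _ _ h => h, fun _ _ _ => ⟨trivial, trivial⟩, fun u _ v _ => h u v⟩

private lemma zero_mem_kappaSSet (D : Dgraph V) (S : Set V) :
    0 ∈ {p : ℕ | ∃ f : Fin p → StrongSub D,
      (∀ i, S ⊆ (f i).verts) ∧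
      (∀ i j, i ≠ j → (f i).verts ∩ (f j).verts = S) ∧
      (∀ i j, i ≠ j → ∀ u v, ¬ ((f i).Arc u v ∧ (f j).Arc u v))} :=
  ⟨Fin.elim0, fun i => i.elim0, fun i => i.elim0, fun i => i.elim0⟩

private lemma one_le_kappaS [Fintype V] {D : Dgraph V} {S : Set V} {a b : V}
    (ha : a ∈ S) (hb : b ∈ S) (hab : a ≠ b) (H : StrongSub D) (hH : S ⊆ H.verts) :
    1 ≤ kappaS D S := by
  refine le_csSup (kappaS_bddAbove D S ha hb hab) ?_
  refine ⟨fun _ => H, fun _ => hH, fun i j hij => absurd (Subsingleton.elim i j) hij,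
    fun i j hij => absurd (Subsingleton.elim i j) hij⟩

private lemma exists_sub_of_one_le [Fintype V] {D : Dgraph V} {S : Set V} {a b : V}
    (ha : a ∈ S) (hb : b ∈ S) (hab : a ≠ b) (h1 : 1 ≤ kappaS D S) :
    ∃ H : StrongSub D, S ⊆ H.verts := by
  have hmem := Nat.sSup_mem ⟨0, zero_mem_kappaSSet D S⟩ (kappaS_bddAbove D S ha hb hab)
  rw [← kappaS] at hmem
  obtain ⟨f, hv, -, -⟩ := hmem
  exact ⟨f ⟨0, by omega⟩, hv _⟩

private lemma minSSC_iff [Fintype V] {k : ℕ} (hk2 : 2 ≤ k) (hkn : k ≤ Fintype.card V)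
    (D : Dgraph V) :
    MinSSC D k 1 ↔ (D.IsStrong ∧ ∀ e : V × V, D.Arc e.1 e.2 → ¬ IsStrong (D.deleteArc e)) := by
  classical
  constructor
  · rintro ⟨h1, h2⟩
    constructor
    · intro u v
      rcases eq_or_ne u v with rfl | hne
      · exact .refl
      · obtain ⟨S, hSsub, hScard⟩ := Finset.exists_superset_card_eq (s := {u, v})
          (by rw [Finset.card_pair hne]; exact hk2) hkn
        have hu : u ∈ (↑S : Set V) := hSsub (by simp)
        have hv : v ∈ (↑S : Set V) := hSsub (by simp)
        have hks : 1 ≤ kappaS D ↑S := le_trans h1 (Nat.sInf_le ⟨S, hScard, rfl⟩)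
        obtain ⟨H, hH⟩ := exists_sub_of_one_le hu hv hne hks
        exact Relation.ReflTransGen.mono H.arc_sub _ _ (H.strong u (hH hu) v (hH hv))
    · intro e harc hstrong'
      have h0 : kappa (D.deleteArc e) k = 0 := by
        have := h2 e harc
        omega
      rw [kappa] at h0
      rcases Nat.sInf_eq_zero.1 h0 with h | h
      · obtain ⟨S, hScard, hkS⟩ := h
        obtain ⟨x, hx, y, hy, hxy⟩ := Finset.one_lt_card.1 (by omega : 1 < S.card)
        have := one_le_kappaS (D := D.deleteArc e) (S := (↑S : Set V)) hx hy hxy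
          (fullSub _ hstrong') (Set.subset_univ _)
        omega
      · obtain ⟨S, -, hScard⟩ := Finset.exists_superset_card_eq (s := (∅ : Finset V))
          (by simp) hkn
        exact absurd h (Set.nonempty_iff_ne_empty.1 ⟨_, ⟨S, hScard, rfl⟩⟩)
  · rintro ⟨hstrong, hmin⟩
    constructor
    · refine le_csInf ?_ ?_
      · obtain ⟨S, -, hScard⟩ := Finset.exists_superset_card_eq (s := (∅ : Finset V))
          (by simp) hkn
        exact ⟨_, S, hScard, rfl⟩
      · rintro m ⟨S, hScard, rfl⟩
        obtain ⟨x, hx, y, hy, hxy⟩ := Finset.one_lt_card.1 (by omega : 1 < S.card)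
        exact one_le_kappaS (S := (↑S : Set V)) hx hy hxy (fullSub D hstrong)
          (Set.subset_univ _)
    · intro e harc
      have hns := hmin e harc
      have hnot : ∃ u v, ¬ Relation.ReflTransGen (D.deleteArc e).Arc u v := by
        by_contra h
        push_neg at h
        exact hns fun u v => h u v
      obtain ⟨u, v, huv⟩ := hnot
      have hne : u ≠ v := by rintro rfl; exact huv .refl
      obtain ⟨S, hSsub, hScard⟩ := Finset.exists_superset_card_eq (s := {u, v})
        (by rw [Finset.card_pair hne]; exact hk2) hkn
      have hu : u ∈ (↑S : Set V) := hSsub (by simp)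
      have hv : v ∈ (↑S : Set V) := hSsub (by simp)
      have hk0 : kappaS (D.deleteArc e) ↑S = 0 := by
        rw [kappaS]
        refine Nat.le_zero.1 (csSup_le ⟨0, zero_mem_kappaSSet _ _⟩ ?_)
        rintro p ⟨f, hfv, -, -⟩
        by_contra hp
        push_neg at hp
        have := (f ⟨0, hp⟩).strong u (hfv _ hu) v (hfv _ hv)
        exact huv (Relation.ReflTransGen.mono (f ⟨0, hp⟩).arc_sub _ _ this)
      have : kappa (D.deleteArc e) k ≤ 0 := hk0 ▸ Nat.sInf_le ⟨S, hScard, rfl⟩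
      omega

end Dgraph
/-- For `2 ≤ k ≤ n`, `F(n, k, 1) = 2(n-1)`, and the minimally strong subgraph
`(k,1)`-connected digraphs attaining this maximum are exactly the symmetric
digraphs whose underlying undirected graphs are trees. -/
theorem stmt19 (n k : ℕ) (hk2 : 2 ≤ k) (hkn : k ≤ n) :
    Dgraph.FMax n k 1 = 2 * (n - 1) ∧
    ∀ D : Dgraph (Fin n),
      (D.MinSSC k 1 ∧ D.arcCount = 2 * (n - 1)) ↔
        (D.IsSymmetric ∧ D.underlying.IsTree) := by
  classical
  have hn2 : 2 ≤ n := hk2.trans hkn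
  have hcardfin : Fintype.card (Fin n) = n := Fintype.card_fin n
  have hkn' : k ≤ Fintype.card (Fin n) := by rwa [hcardfin]
  haveI : Nonempty (Fin n) := ⟨⟨0, by omega⟩⟩
  -- the characterization
  have hiff : ∀ D : Dgraph (Fin n),
      (D.MinSSC k 1 ∧ D.arcCount = 2 * (n - 1)) ↔
        (D.IsSymmetric ∧ D.underlying.IsTree) := by
    intro D
    rw [Dgraph.minSSC_iff hk2 hkn']
    constructor
    · rintro ⟨⟨hstrong, hmin⟩, hcard⟩
      have hsym := Dgraph.msd_symm hstrong hmin (by omega) (by rwa [hcardfin])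
      exact ⟨hsym, Dgraph.msd_symm_tree hstrong hmin hsym⟩
    · rintro ⟨hsym, htree⟩
      have hstrong := Dgraph.symm_conn_strong hsym htree.isConnected.preconnected
      have hmin := Dgraph.symm_tree_min hsym htree
      refine ⟨⟨hstrong, hmin⟩, ?_⟩
      have := Dgraph.symm_tree_card hsym htree
      rwa [hcardfin] at this
  refine ⟨?_, hiff⟩
  -- the star digraph witness
  set z : Fin n := ⟨0, by omega⟩ with hz
  set D₀ : Dgraph (Fin n) :=
    { Arc := fun u v => (u = z ∧ v ≠ z) ∨ (v = z ∧ u ≠ z)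
      loopless := by rintro v (⟨h1, h2⟩ | ⟨h1, h2⟩) <;> exact h2 h1 } with hD₀
  have hsym₀ : D₀.IsSymmetric := by
    rintro u v (⟨h1, h2⟩ | ⟨h1, h2⟩)
    · exact Or.inr ⟨h1, h2⟩
    · exact Or.inl ⟨h1, h2⟩
  have hstrong₀ : D₀.IsStrong := by
    intro u v
    rcases eq_or_ne u v with rfl | huv
    · exact .refl
    · have h1 : Relation.ReflTransGen D₀.Arc u z := by
        rcases eq_or_ne u z with rfl | hu
        · exact .refl
        · exact Relation.ReflTransGen.single (Or.inr ⟨rfl, hu⟩)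
      have h2 : Relation.ReflTransGen D₀.Arc z v := by
        rcases eq_or_ne v z with rfl | hv
        · exact .refl
        · exact Relation.ReflTransGen.single (Or.inl ⟨rfl, hv⟩)
      exact h1.trans h2
  have hmin₀ : ∀ e : Fin n × Fin n, D₀.Arc e.1 e.2 → ¬ Dgraph.IsStrong (D₀.deleteArc e) := by
    rintro ⟨u, v⟩ harc hs
    rcases harc with ⟨rfl, hv⟩ | ⟨rfl, hu⟩
    · -- u = z : the only in-arc of v is (z, v)
      have huv := hs z v
      rcases huv.cases_tail with h | ⟨c, -, hcv⟩
      · exact hv h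
      · obtain ⟨harc', hne⟩ := hcv
        rcases harc' with ⟨h1, -⟩ | ⟨h1, -⟩
        · exact hne (by rw [h1])
        · exact hv h1
    · -- v = z : the only out-arc of u is (u, z)
      have huv := hs u z
      rcases huv.cases_head with h | ⟨c, hc, -⟩
      · exact hu h
      · obtain ⟨harc', hne⟩ := hc
        rcases harc' with ⟨h1, -⟩ | ⟨h1, -⟩
        · exact hu h1
        · exact hne (by rw [h1])
  have htree₀ : D₀.underlying.IsTree := Dgraph.msd_symm_tree hstrong₀ hmin₀ hsym₀
  have hmem : 2 * (n - 1) ∈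
      {m : ℕ | ∃ D : Dgraph (Fin n), D.MinSSC k 1 ∧ D.arcCount = m} :=
    ⟨D₀, (hiff D₀).2 ⟨hsym₀, htree₀⟩⟩
  have hub : ∀ m ∈ {m : ℕ | ∃ D : Dgraph (Fin n), D.MinSSC k 1 ∧ D.arcCount = m},
      m ≤ 2 * (n - 1) := by
    rintro m ⟨D, hD, rfl⟩
    rw [Dgraph.minSSC_iff hk2 hkn'] at hD
    have := Dgraph.msd_card_le hD.1 hD.2
    rwa [hcardfin] at this
  rw [Dgraph.FMax]
  exact le_antisymm (csSup_le ⟨_, hmem⟩ hub) (le_csSup ⟨2 * (n - 1), hub⟩ hmem)
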